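/- Let ε ∈ (0,1]. For i = 1, 2 let Ū_i : ℝ → ℝ be 1-periodic continuous functions with ‖Ū_i‖_{∞} ≤ 1, and let Û_i : ℝ → ℝ be 1-periodic C² functions with ‖Û_i‖_{∞} ≤ 4 satisfying Û_i'' = e^{(Ū_i + Û_i)/ε²} − 1 on ℝ. Then ∫₀¹ (Û_1'(x) − Û_2'(x))² dx ≤ ε⁻⁴ e^{15/ε²} ∫₀¹ (Ū_1(x) − Ū_2(x))² dx. -/

import Mathlib

open MeasureTheory Real Filter Topology


lemma periodic_deriv_eq (f : ℝ → ℝ) (hf : Function.Periodic f 1) : deriv f 1 = deriv f 0 := by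
  have h : (fun y => f (y + 1)) = f := funext hf
  have := deriv_comp_add_const f 1 0
  rw [h] at this
  simpa using this.symm

lemma exp_lower {s t : ℝ} : Real.exp t * (s - t) ≤ Real.exp s - Real.exp t := by
  have hexp : Real.exp s = Real.exp t * Real.exp (s - t) := by
    rw [← Real.exp_add]; ring_nf
  have h1 := Real.add_one_le_exp (s - t)
  nlinarith [mul_le_mul_of_nonneg_left h1 (Real.exp_pos t).le]

lemma exp_key (B c : ℝ) (hc : 0 < c) (s t v w : ℝ) (hs : |s| ≤ B) (ht : |t| ≤ B)
    (h : c * (s - t) = v + w) :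
    -((Real.exp s - Real.exp t) * w) ≤ Real.exp (3*B) / (4*c) * v^2 := by
  obtain ⟨hs1, hs2⟩ := abs_le.mp hs
  obtain ⟨ht1, ht2⟩ := abs_le.mp ht
  set P := Real.exp B with hP
  have hP0 : 0 < P := Real.exp_pos B
  have h3B : Real.exp (3*B) = P^3 := by
    rw [hP, ← Real.exp_nat_mul]; ring_nf
  have hinv : Real.exp (-B) = P⁻¹ := by rw [hP, Real.exp_neg]
  -- claim 1
  have claim1 : P⁻¹ * (s - t)^2 ≤ (s - t) * (Real.exp s - Real.exp t) := by
    rcases le_total t s with hle | hle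
    · have e1 : Real.exp t * (s - t) ≤ Real.exp s - Real.exp t := exp_lower
      have e2 : P⁻¹ ≤ Real.exp t := by rw [← hinv]; exact Real.exp_le_exp.mpr ht1
      have h0 : (0:ℝ) ≤ s - t := by linarith
      nlinarith [mul_le_mul_of_nonneg_left e1 h0, mul_le_mul_of_nonneg_right e2 (sq_nonneg (s - t))]
    · have e1 : Real.exp s * (t - s) ≤ Real.exp t - Real.exp s := exp_lower
      have e2 : P⁻¹ ≤ Real.exp s := by rw [← hinv]; exact Real.exp_le_exp.mpr hs1
      have h0 : (0:ℝ) ≤ t - s := by linarith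
      nlinarith [mul_le_mul_of_nonneg_left e1 h0, mul_le_mul_of_nonneg_right e2 (sq_nonneg (t - s))]
  -- claim 2
  have claim2 : |Real.exp s - Real.exp t| ≤ P * |s - t| := by
    rcases le_total t s with hle | hle
    · have e1 : Real.exp t * (s - t) ≤ Real.exp s - Real.exp t := exp_lower
      have e1' : Real.exp s - Real.exp t ≤ Real.exp s * (s - t) := by
        have := exp_lower (s := t) (t := s); nlinarith
      have e2 : Real.exp s ≤ P := Real.exp_le_exp.mpr hs2
      rw [abs_of_nonneg (by nlinarith [Real.exp_pos t] : (0:ℝ) ≤ Real.exp s - Real.exp t),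
        abs_of_nonneg (by linarith : (0:ℝ) ≤ s - t)]
      nlinarith [Real.exp_pos s]
    · have e1' : Real.exp t - Real.exp s ≤ Real.exp t * (t - s) := by
        have := exp_lower (s := s) (t := t); nlinarith
      have e2 : Real.exp t ≤ P := Real.exp_le_exp.mpr ht2
      have e3 : Real.exp s ≤ Real.exp t := Real.exp_le_exp.mpr hle
      rw [abs_of_nonpos (by linarith : Real.exp s - Real.exp t ≤ 0),
        abs_of_nonpos (by linarith : s - t ≤ 0)]
      nlinarith [Real.exp_pos t]
  -- combine
  have hw : w = c * (s - t) - v := by linarith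
  have hvE : v * (Real.exp s - Real.exp t) ≤ |v| * (P * |s - t|) := by
    calc v * (Real.exp s - Real.exp t) ≤ |v * (Real.exp s - Real.exp t)| := le_abs_self _
    _ = |v| * |Real.exp s - Real.exp t| := abs_mul _ _
    _ ≤ |v| * (P * |s - t|) := mul_le_mul_of_nonneg_left claim2 (abs_nonneg v)
  have hfin : -c * (P⁻¹ * |s - t|^2) + |v| * (P * |s - t|) ≤ P^3 / (4*c) * |v|^2 := by
    have h4 : (0:ℝ) < 4*c*P := by positivity
    have expand : P^3/(4*c)*|v|^2 - (-c * (P⁻¹ * |s - t|^2) + |v| * (P * |s - t|))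
        = (2*c*|s - t| - P^2*|v|)^2/(4*c*P) := by
      field_simp
      ring_nf
    have hnn : (0:ℝ) ≤ (2*c*|s - t| - P^2*|v|)^2/(4*c*P) :=
      div_nonneg (sq_nonneg _) h4.le
    linarith
  have hsq1 : |s - t|^2 = (s - t)^2 := sq_abs _
  have hsq2 : |v|^2 = v^2 := sq_abs _
  rw [hw, h3B, ← hsq2]
  calc -((Real.exp s - Real.exp t) * (c * (s - t) - v))
      = -c * ((s - t) * (Real.exp s - Real.exp t)) + v * (Real.exp s - Real.exp t) := by ring
    _ ≤ -c * (P⁻¹ * |s - t|^2) + |v| * (P * |s - t|) := by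
        rw [hsq1]
        have := mul_le_mul_of_nonneg_left claim1 hc.le
        nlinarith [hvE]
    _ ≤ P^3 / (4*c) * |v|^2 := hfin

/-- L² stability estimate for the regular part of the electric field:
if Û_i'' = e^{(Ū_i+Û_i)/ε²} − 1 (i = 1,2) with ‖Ū_i‖_∞ ≤ 1 and ‖Û_i‖_∞ ≤ 4, then
∫₀¹ (Û₁' − Û₂')² ≤ ε⁻⁴ e^{15/ε²} ∫₀¹ (Ū₁ − Ū₂)². -/
theorem hatU_L2_stability (ε : ℝ) (hε : ε ∈ Set.Ioc (0:ℝ) 1)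
    (Ub₁ Ub₂ Uh₁ Uh₂ : ℝ → ℝ)
    (hper₁ : Function.Periodic Ub₁ 1) (hper₂ : Function.Periodic Ub₂ 1)
    (hperh₁ : Function.Periodic Uh₁ 1) (hperh₂ : Function.Periodic Uh₂ 1)
    (hcont₁ : Continuous Ub₁) (hcont₂ : Continuous Ub₂)
    (hb₁ : ∀ x, |Ub₁ x| ≤ 1) (hb₂ : ∀ x, |Ub₂ x| ≤ 1)
    (hC2₁ : ContDiff ℝ 2 Uh₁) (hC2₂ : ContDiff ℝ 2 Uh₂)
    (hhb₁ : ∀ x, |Uh₁ x| ≤ 4) (hhb₂ : ∀ x, |Uh₂ x| ≤ 4)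
    (heq₁ : ∀ x, deriv (deriv Uh₁) x = Real.exp ((Ub₁ x + Uh₁ x)/ε^2) - 1)
    (heq₂ : ∀ x, deriv (deriv Uh₂) x = Real.exp ((Ub₂ x + Uh₂ x)/ε^2) - 1) :
    (∫ x in (0:ℝ)..1, (deriv Uh₁ x - deriv Uh₂ x)^2)
      ≤ (1/ε^4) * Real.exp (15/ε^2) * ∫ x in (0:ℝ)..1, (Ub₁ x - Ub₂ x)^2 := by
  obtain ⟨hε0, hε1⟩ := hε
  have hc : (0:ℝ) < ε^2 := by positivity
  -- differentiability data
  have hd₁ : Differentiable ℝ Uh₁ := hC2₁.differentiable (by norm_num)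
  have hd₂ : Differentiable ℝ Uh₂ := hC2₂.differentiable (by norm_num)
  have h12 : (2 : WithTop ℕ∞) = 1 + 1 := by norm_num
  have hcd₁ : ContDiff ℝ 1 (deriv Uh₁) := by
    rw [h12, contDiff_succ_iff_deriv] at hC2₁; exact hC2₁.2.2
  have hcd₂ : ContDiff ℝ 1 (deriv Uh₂) := by
    rw [h12, contDiff_succ_iff_deriv] at hC2₂; exact hC2₂.2.2
  have hd₁' : Differentiable ℝ (deriv Uh₁) := hcd₁.differentiable (by norm_num)
  have hd₂' : Differentiable ℝ (deriv Uh₂) := hcd₂.differentiable (by norm_num)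
  -- notation
  set w : ℝ → ℝ := fun x => Uh₁ x - Uh₂ x with hw
  set w' : ℝ → ℝ := fun x => deriv Uh₁ x - deriv Uh₂ x with hw'
  set F : ℝ → ℝ := fun x =>
    Real.exp ((Ub₁ x + Uh₁ x)/ε^2) - Real.exp ((Ub₂ x + Uh₂ x)/ε^2) with hF
  have hFcont : Continuous F := by
    apply Continuous.sub
    · exact Real.continuous_exp.comp ((hcont₁.add hd₁.continuous).div_const _)
    · exact Real.continuous_exp.comp ((hcont₂.add hd₂.continuous).div_const _)
  have hwcont : Continuous w := hd₁.continuous.sub hd₂.continuous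
  have hw'cont : Continuous w' := hcd₁.continuous.sub hcd₂.continuous
  -- integration by parts
  have hu : ∀ x ∈ Set.uIcc (0:ℝ) 1, HasDerivAt w (w' x) x := fun x _ =>
    ((hd₁ x).hasDerivAt).sub ((hd₂ x).hasDerivAt)
  have hv : ∀ x ∈ Set.uIcc (0:ℝ) 1, HasDerivAt w' (F x) x := by
    intro x _
    have h1 := (hd₁' x).hasDerivAt
    have h2 := (hd₂' x).hasDerivAt
    have h3 := h1.sub h2
    rw [heq₁ x, heq₂ x] at h3
    have : Real.exp ((Ub₁ x + Uh₁ x)/ε^2) - 1 - (Real.exp ((Ub₂ x + Uh₂ x)/ε^2) - 1)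
        = F x := by rw [hF]; ring
    rwa [this] at h3
  have hu' : IntervalIntegrable w' MeasureTheory.volume 0 1 := hw'cont.intervalIntegrable _ _
  have hv' : IntervalIntegrable F MeasureTheory.volume 0 1 := hFcont.intervalIntegrable _ _
  have hibp := intervalIntegral.integral_mul_deriv_eq_deriv_mul hu hv hu' hv'
  -- boundary terms vanish by periodicity
  have hb1 : w 1 = w 0 := by
    simp only [hw]
    rw [show (1:ℝ) = 0 + 1 by norm_num, hperh₁ 0, hperh₂ 0]
  have hb2 : w' 1 = w' 0 := by
    simp only [hw']
    rw [periodic_deriv_eq Uh₁ hperh₁, periodic_deriv_eq Uh₂ hperh₂]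
  rw [hb1, hb2] at hibp
  have hibp' : (∫ x in (0:ℝ)..1, w' x * w' x) = ∫ x in (0:ℝ)..1, -(w x * F x) := by
    rw [intervalIntegral.integral_neg]
    linarith [hibp]
  -- pointwise estimate
  set M : ℝ := Real.exp (3*(5/ε^2)) / (4*ε^2) with hM
  have hpt : ∀ x ∈ Set.Icc (0:ℝ) 1, -(w x * F x) ≤ M * (Ub₁ x - Ub₂ x)^2 := by
    intro x _
    have hs : |(Ub₁ x + Uh₁ x)/ε^2| ≤ 5/ε^2 := by
      have h5 : |Ub₁ x + Uh₁ x| ≤ 5 := (abs_add_le _ _).trans (by linarith [hb₁ x, hhb₁ x])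
      rw [abs_div, abs_of_pos hc]
      gcongr
    have ht : |(Ub₂ x + Uh₂ x)/ε^2| ≤ 5/ε^2 := by
      have h5 : |Ub₂ x + Uh₂ x| ≤ 5 := (abs_add_le _ _).trans (by linarith [hb₂ x, hhb₂ x])
      rw [abs_div, abs_of_pos hc]
      gcongr
    have hrel : ε^2 * ((Ub₁ x + Uh₁ x)/ε^2 - (Ub₂ x + Uh₂ x)/ε^2)
        = (Ub₁ x - Ub₂ x) + w x := by
      field_simp [hw]
      ring
    have := exp_key (5/ε^2) (ε^2) hc ((Ub₁ x + Uh₁ x)/ε^2) ((Ub₂ x + Uh₂ x)/ε^2)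
      (Ub₁ x - Ub₂ x) (w x) hs ht hrel
    rw [hM]
    calc -(w x * F x) = -((Real.exp ((Ub₁ x + Uh₁ x)/ε^2)
          - Real.exp ((Ub₂ x + Uh₂ x)/ε^2)) * w x) := by rw [hF]; ring
      _ ≤ Real.exp (3*(5/ε^2)) / (4*ε^2) * (Ub₁ x - Ub₂ x)^2 := this
  -- put everything together
  have hInt1 : IntervalIntegrable (fun x => -(w x * F x)) MeasureTheory.volume 0 1 :=
    ((hwcont.mul hFcont).neg).intervalIntegrable _ _
  have hInt2 : IntervalIntegrable (fun x => M * (Ub₁ x - Ub₂ x)^2) MeasureTheory.volume 0 1 :=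
    (continuous_const.mul ((hcont₁.sub hcont₂).pow 2)).intervalIntegrable _ _
  have hmono := intervalIntegral.integral_mono_on (by norm_num : (0:ℝ) ≤ 1) hInt1 hInt2 hpt
  have hsq : (∫ x in (0:ℝ)..1, (deriv Uh₁ x - deriv Uh₂ x)^2)
      = ∫ x in (0:ℝ)..1, w' x * w' x := by
    apply intervalIntegral.integral_congr
    intro x _
    simp only [hw']
    ring
  have hIv : (0:ℝ) ≤ ∫ x in (0:ℝ)..1, (Ub₁ x - Ub₂ x)^2 :=
    intervalIntegral.integral_nonneg (by norm_num) (fun x _ => sq_nonneg _)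
  have hconst : (∫ x in (0:ℝ)..1, M * (Ub₁ x - Ub₂ x)^2)
      = M * ∫ x in (0:ℝ)..1, (Ub₁ x - Ub₂ x)^2 := intervalIntegral.integral_const_mul _ _
  have hMle : M ≤ (1/ε^4) * Real.exp (15/ε^2) := by
    rw [hM, show 3*(5/ε^2) = 15/ε^2 by ring]
    rw [div_le_iff₀ (by positivity), mul_comm (1/ε^4), mul_assoc]
    have hsq1 : ε^2 ≤ 1 := by nlinarith
    have h1 : ε^4 ≤ 4*ε^2 := by nlinarith [mul_le_mul_of_nonneg_left hsq1 hc.le]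
    have h2 : (0:ℝ) < Real.exp (15/ε^2) := Real.exp_pos _
    rw [show (1:ℝ)/ε^4 * (4*ε^2) = (4*ε^2)/ε^4 by ring]
    calc Real.exp (15/ε^2) = Real.exp (15/ε^2) * 1 := by ring
      _ ≤ Real.exp (15/ε^2) * ((4*ε^2)/ε^4) := by
          gcongr
          rw [le_div_iff₀ (by positivity)]
          linarith
  calc (∫ x in (0:ℝ)..1, (deriv Uh₁ x - deriv Uh₂ x)^2)
      = ∫ x in (0:ℝ)..1, -(w x * F x) := by rw [hsq, hibp']
    _ ≤ ∫ x in (0:ℝ)..1, M * (Ub₁ x - Ub₂ x)^2 := hmono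
    _ = M * ∫ x in (0:ℝ)..1, (Ub₁ x - Ub₂ x)^2 := hconst
    _ ≤ (1/ε^4) * Real.exp (15/ε^2) * ∫ x in (0:ℝ)..1, (Ub₁ x - Ub₂ x)^2 :=
        mul_le_mul_of_nonneg_right hMle hIv
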